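/- For every μ > 0 and every α ∈ (0,1), the bound G_μ(α) = Φ(Φ^{-1}(1 − α) − μ) is exactly the trade-off function of N(0,1) versus N(μ,1): for every measurable test φ : ℝ → [0,1] with ∫ φ dN(0,1) ≤ α one has 1 − ∫ φ dN(μ,1) ≥ G_μ(α), and there exists a measurable test φ* : ℝ → [0,1] with ∫ φ* dN(0,1) = α and 1 − ∫ φ* dN(μ,1) = G_μ(α) (namely the threshold test φ*(x) = 1 if x > Φ^{-1}(1−α), else 0). -/

import Mathlib

open MeasureTheory ProbabilityTheory Set Filter
open scoped ENNReal NNReal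

/-- Standard normal cumulative distribution function Φ. -/
noncomputable def stdGaussCDF (x : ℝ) : ℝ := ((gaussianReal 0 1) (Set.Iic x)).toReal

/-- Inverse Φ⁻¹ of the standard normal CDF (on (0,1)). -/
noncomputable def stdGaussCDFInv (p : ℝ) : ℝ := Function.invFun stdGaussCDF p


lemma integral_gaussianReal' (m : ℝ) (φ : ℝ → ℝ) :
    ∫ x, φ x ∂(gaussianReal m 1) = ∫ x, φ x * gaussianPDFReal m 1 x := by
  rw [gaussianReal_of_var_ne_zero m one_ne_zero]
  have h : gaussianPDF m 1 = fun x => ((gaussianPDFReal m 1 x).toNNReal : ℝ≥0∞) := rfl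
  rw [h, integral_withDensity_eq_integral_smul
    ((measurable_gaussianPDFReal m 1).real_toNNReal) φ]
  refine integral_congr_ae (Filter.Eventually.of_forall fun x => ?_)
  simp [NNReal.smul_def, Real.coe_toNNReal _ (gaussianPDFReal_nonneg m 1 x), mul_comm]

lemma pdf_ratio (m x : ℝ) :
    gaussianPDFReal m 1 x = Real.exp (m * x - m ^ 2 / 2) * gaussianPDFReal 0 1 x := by
  simp only [gaussianPDFReal, NNReal.coe_one, mul_one, sub_zero]
  rw [mul_left_comm, ← Real.exp_add]
  ring_nf

lemma gaussianPDFReal_le_one (x : ℝ) : gaussianPDFReal 0 1 x ≤ 1 := by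
  simp only [gaussianPDFReal, NNReal.coe_one, mul_one, sub_zero]
  have h1 : Real.exp (-x ^ 2 / 2) ≤ 1 := by
    rw [Real.exp_le_one_iff]; nlinarith [sq_nonneg x]
  have h2 : (1:ℝ) ≤ Real.sqrt (2 * Real.pi) := by
    rw [show (1:ℝ) = Real.sqrt 1 by simp]
    exact Real.sqrt_le_sqrt (by nlinarith [Real.pi_gt_three])
  calc (Real.sqrt (2 * Real.pi))⁻¹ * Real.exp (-x ^ 2 / 2)
      ≤ 1 * 1 := by
        apply mul_le_mul _ h1 (Real.exp_nonneg _) zero_le_one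
        rw [inv_le_one_iff₀]; right; exact h2
    _ = 1 := by ring

lemma stdGaussCDF_mono : Monotone stdGaussCDF := fun x y hxy =>
  ENNReal.toReal_mono (measure_ne_top _ _) (measure_mono (Set.Iic_subset_Iic.2 hxy))

lemma stdGaussCDF_lipschitz : LipschitzWith 1 stdGaussCDF := by
  apply LipschitzWith.of_dist_le_mul
  have key : ∀ x y : ℝ, x ≤ y → stdGaussCDF y - stdGaussCDF x ≤ y - x := by
    intro x y hxy
    have hsplit : (gaussianReal 0 1) (Set.Iic y)
        = (gaussianReal 0 1) (Set.Iic x) + (gaussianReal 0 1) (Set.Ioc x y) := by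
      rw [← Set.Iic_union_Ioc_eq_Iic hxy, measure_union _ measurableSet_Ioc]
      exact Set.Iic_disjoint_Ioc le_rfl
    have hadd : stdGaussCDF y = stdGaussCDF x + ((gaussianReal 0 1) (Set.Ioc x y)).toReal := by
      rw [stdGaussCDF, stdGaussCDF, hsplit, ENNReal.toReal_add (measure_ne_top _ _) (measure_ne_top _ _)]
    rw [hadd]
    have hb : ((gaussianReal 0 1) (Set.Ioc x y)).toReal ≤ y - x := by
      rw [gaussianReal_apply_eq_integral 0 one_ne_zero,
        ENNReal.toReal_ofReal (integral_nonneg fun z => gaussianPDFReal_nonneg 0 1 z)]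
      calc ∫ z in Set.Ioc x y, gaussianPDFReal 0 1 z
          ≤ ∫ _z in Set.Ioc x y, (1:ℝ) := by
            apply setIntegral_mono_on (integrable_gaussianPDFReal 0 1).integrableOn
              (integrableOn_const (by simp [Real.volume_Ioc]))
              measurableSet_Ioc
            exact fun z _ => gaussianPDFReal_le_one z
        _ = (volume (Set.Ioc x y)).toReal := by
            simp; rw [ENNReal.toReal_ofReal (by linarith), max_eq_left (by linarith)]
        _ = y - x := by rw [Real.volume_Ioc, ENNReal.toReal_ofReal (by linarith)]
    linarith
  intro x y
  rw [NNReal.coe_one, one_mul, Real.dist_eq, Real.dist_eq]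
  rcases le_total x y with h | h
  · have h1 := key x y h
    have h2 : stdGaussCDF x ≤ stdGaussCDF y := stdGaussCDF_mono h
    rw [abs_of_nonpos (by linarith), abs_of_nonpos (by linarith)]
    linarith
  · have h1 := key y x h
    have h2 : stdGaussCDF y ≤ stdGaussCDF x := stdGaussCDF_mono h
    rw [abs_of_nonneg (by linarith), abs_of_nonneg (by linarith)]
    linarith

lemma stdGaussCDF_tendsto_atTop : Tendsto stdGaussCDF atTop (nhds 1) := by
  have h := tendsto_measure_Iic_atTop (gaussianReal 0 1)
  rw [measure_univ] at h
  have := (ENNReal.tendsto_toReal (by norm_num : (1:ℝ≥0∞) ≠ ⊤)).comp h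
  exact this

lemma stdGaussCDF_tendsto_atBot : Tendsto stdGaussCDF atBot (nhds 0) := by
  have hm : Monotone (fun x : ℝ => Set.Iic x) := fun a b hab => Set.Iic_subset_Iic.2 hab
  have h := tendsto_measure_iInter_atBot
    (fun x : ℝ => (measurableSet_Iic (a := x)).nullMeasurableSet) hm
    ⟨0, measure_ne_top (gaussianReal 0 1) _⟩
  have hempty : ⋂ x : ℝ, Set.Iic x = ∅ := by
    ext z; simp only [Set.mem_iInter, Set.mem_Iic, Set.mem_empty_iff_false, iff_false, not_forall]
    exact ⟨z - 1, by push_neg; linarith⟩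
  rw [hempty, measure_empty] at h
  have := (ENNReal.tendsto_toReal (by norm_num : (0:ℝ≥0∞) ≠ ⊤)).comp h
  exact this

lemma stdGaussCDF_surj {p : ℝ} (hp : 0 < p) (hp1 : p < 1) : ∃ t, stdGaussCDF t = p := by
  obtain ⟨a, ha⟩ := (stdGaussCDF_tendsto_atBot.eventually (gt_mem_nhds hp)).exists
  obtain ⟨b, hb⟩ := (stdGaussCDF_tendsto_atTop.eventually (lt_mem_nhds hp1)).exists
  have hab : a ≤ b := by
    by_contra h
    exact absurd (stdGaussCDF_mono (le_of_not_ge h)) (not_le.2 (lt_trans ha hb))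
  obtain ⟨t, _, ht⟩ := intermediate_value_Icc hab stdGaussCDF_lipschitz.continuous.continuousOn
    ⟨le_of_lt ha, le_of_lt hb⟩
  exact ⟨t, ht⟩

lemma gauss_Iic (m s : ℝ) :
    gaussianReal m 1 (Set.Iic s) = gaussianReal 0 1 (Set.Iic (s - m)) := by
  have h : Measure.map (· + m) (gaussianReal 0 1) = gaussianReal m 1 := by
    rw [gaussianReal_map_add_const m, zero_add]
  rw [← h, Measure.map_apply (measurable_add_const m) measurableSet_Iic]
  congr 1
  ext x
  simp only [Set.mem_preimage, Set.mem_Iic]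
  constructor <;> intro <;> linarith

lemma integral_threshold (ν : Measure ℝ) [IsProbabilityMeasure ν] (t : ℝ) :
    ∫ x, (if t < x then (1:ℝ) else 0) ∂ν = 1 - (ν (Set.Iic t)).toReal := by
  have h : (fun x => if t < x then (1:ℝ) else 0) = Set.indicator (Set.Ioi t) (fun _ => 1) := by
    ext x; simp [Set.indicator_apply, Set.mem_Ioi]
  rw [h, integral_indicator measurableSet_Ioi, setIntegral_const, smul_eq_mul, mul_one,
    ← Set.compl_Iic, Measure.real, prob_compl_eq_one_sub measurableSet_Iic,
    ENNReal.toReal_sub_of_le prob_le_one ENNReal.one_ne_top]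
  simp

/-- `G_μ(α) = Φ(Φ⁻¹(1-α) - μ)` is exactly the trade-off function of `N(0,1)` vs `N(μ,1)`:
every measurable test with type-I error ≤ α has type-II error ≥ G_μ(α), and the threshold
test `φ*(x) = 1 if x > Φ⁻¹(1-α) else 0` attains type-I error `α` and type-II error `G_μ(α)`. -/
theorem tradeoff_of_gaussians (μ : ℝ) (hμ : 0 < μ) (α : ℝ) (hα : α ∈ Set.Ioo (0 : ℝ) 1) :
    (∀ φ : ℝ → ℝ, Measurable φ → (∀ x, φ x ∈ Set.Icc (0 : ℝ) 1) →
      ∫ x, φ x ∂(gaussianReal 0 1) ≤ α →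
      1 - ∫ x, φ x ∂(gaussianReal μ 1) ≥ stdGaussCDF (stdGaussCDFInv (1 - α) - μ)) ∧
    (∃ φs : ℝ → ℝ, Measurable φs ∧ (∀ x, φs x ∈ Set.Icc (0 : ℝ) 1) ∧
      φs = (fun x => if stdGaussCDFInv (1 - α) < x then (1 : ℝ) else 0) ∧
      ∫ x, φs x ∂(gaussianReal 0 1) = α ∧
      1 - ∫ x, φs x ∂(gaussianReal μ 1) = stdGaussCDF (stdGaussCDFInv (1 - α) - μ)) := by
  obtain ⟨hα0, hα1⟩ := hα
  set t := stdGaussCDFInv (1 - α) with ht_def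
  have hΦt : stdGaussCDF t = 1 - α :=
    Function.invFun_eq (stdGaussCDF_surj (by linarith) (by linarith))
  have hint0 : ∫ x, (if t < x then (1:ℝ) else 0) ∂(gaussianReal 0 1) = α := by
    rw [integral_threshold]
    show 1 - stdGaussCDF t = α
    rw [hΦt]; ring
  have hintμ : ∫ x, (if t < x then (1:ℝ) else 0) ∂(gaussianReal μ 1)
      = 1 - stdGaussCDF (t - μ) := by
    rw [integral_threshold, gauss_Iic]
    rfl
  set φs : ℝ → ℝ := fun x => if t < x then (1:ℝ) else 0 with hφs_def
  have hφs_meas : Measurable φs := by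
    have h : φs = Set.indicator (Set.Ioi t) (fun _ => (1:ℝ)) := by
      funext x; simp [φs, Set.indicator_apply, Set.mem_Ioi]
    rw [h]
    exact measurable_const.indicator measurableSet_Ioi
  have hφs01 : ∀ x, φs x ∈ Set.Icc (0:ℝ) 1 := by
    intro x; dsimp [φs]; split <;> norm_num
  constructor
  · intro φ hφm hφ01 hφα
    set f := gaussianPDFReal 0 1 with hf_def
    set g := gaussianPDFReal μ 1 with hg_def
    set c := Real.exp (μ * t - μ ^ 2 / 2) with hc_def
    have hc : 0 ≤ c := Real.exp_nonneg _
    have hIf : Integrable f := integrable_gaussianPDFReal 0 1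
    have hIg : Integrable g := integrable_gaussianPDFReal μ 1
    have hbd : ∀ (ψ : ℝ → ℝ), Measurable ψ → (∀ x, ψ x ∈ Set.Icc (0:ℝ) 1) →
        ∀ (h : ℝ → ℝ), Integrable h → Measurable h → (∀ x, 0 ≤ h x) →
        Integrable (fun x => ψ x * h x) := by
      intro ψ hm h01 h hI hmeas hpos
      refine hI.mono ((hm.mul hmeas).aestronglyMeasurable)
        (Filter.Eventually.of_forall fun x => ?_)
      rw [Real.norm_eq_abs, Real.norm_eq_abs, abs_mul, abs_of_nonneg (h01 x).1,
        abs_of_nonneg (hpos x)]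
      exact mul_le_of_le_one_left (hpos x) (h01 x).2
    have hI1 : Integrable (fun x => φs x * g x) :=
      hbd φs hφs_meas hφs01 g hIg (measurable_gaussianPDFReal μ 1)
        (gaussianPDFReal_nonneg μ 1)
    have hI2 : Integrable (fun x => φ x * g x) :=
      hbd φ hφm hφ01 g hIg (measurable_gaussianPDFReal μ 1) (gaussianPDFReal_nonneg μ 1)
    have hI3 : Integrable (fun x => φs x * f x) :=
      hbd φs hφs_meas hφs01 f hIf (measurable_gaussianPDFReal 0 1)
        (gaussianPDFReal_nonneg 0 1)
    have hI4 : Integrable (fun x => φ x * f x) :=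
      hbd φ hφm hφ01 f hIf (measurable_gaussianPDFReal 0 1) (gaussianPDFReal_nonneg 0 1)
    have hφf : ∫ x, φ x * f x ≤ α := by
      rw [← integral_gaussianReal']; exact hφα
    have hφsf : ∫ x, φs x * f x = α := by
      rw [← integral_gaussianReal']; exact hint0
    have hφsg : ∫ x, φs x * g x = 1 - stdGaussCDF (t - μ) := by
      rw [← integral_gaussianReal']; exact hintμ
    have hpoint : ∀ x, 0 ≤ (φs x - φ x) * (g x - c * f x) := by
      intro x
      have hfx : 0 < f x := gaussianPDFReal_pos 0 1 x one_ne_zero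
      have hgx : g x = Real.exp (μ * x - μ ^ 2 / 2) * f x := pdf_ratio μ x
      by_cases hx : t < x
      · have h1 : φs x = 1 := if_pos hx
        apply mul_nonneg
        · rw [h1]; linarith [(hφ01 x).2]
        · rw [hgx]
          have hcc : c ≤ Real.exp (μ * x - μ ^ 2 / 2) :=
            Real.exp_le_exp.2 (by nlinarith)
          nlinarith
      · have h1 : φs x = 0 := if_neg hx
        push_neg at hx
        have ha : φs x - φ x ≤ 0 := by rw [h1]; linarith [(hφ01 x).1]
        have hb : g x - c * f x ≤ 0 := by
          rw [hgx]
          have hcc : Real.exp (μ * x - μ ^ 2 / 2) ≤ c :=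
            Real.exp_le_exp.2 (by nlinarith)
          nlinarith
        nlinarith
    have hsplit : ∫ x, (φs x - φ x) * (g x - c * f x)
        = (∫ x, φs x * g x) - (∫ x, φ x * g x) - c * (∫ x, φs x * f x)
          + c * (∫ x, φ x * f x) := by
      have heq : (fun x => (φs x - φ x) * (g x - c * f x))
          = fun x => ((φs x * g x - φ x * g x) - c * (φs x * f x)) + c * (φ x * f x) := by
        funext x; ring
      have e2 : ∫ x, ((φs x * g x - φ x * g x) - c * (φs x * f x)) + c * (φ x * f x)
          = (∫ x, (φs x * g x - φ x * g x) - c * (φs x * f x)) + ∫ x, c * (φ x * f x) :=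
        integral_add ((hI1.sub hI2).sub (hI3.const_mul c)) (hI4.const_mul c)
      have e3 : ∫ x, (φs x * g x - φ x * g x) - c * (φs x * f x)
          = (∫ x, φs x * g x - φ x * g x) - ∫ x, c * (φs x * f x) :=
        integral_sub (hI1.sub hI2) (hI3.const_mul c)
      have e4 : ∫ x, φs x * g x - φ x * g x
          = (∫ x, φs x * g x) - ∫ x, φ x * g x := integral_sub hI1 hI2
      have e5 : ∫ x, c * (φs x * f x) = c * ∫ x, φs x * f x :=
        integral_const_mul c _
      have e6 : ∫ x, c * (φ x * f x) = c * ∫ x, φ x * f x :=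
        integral_const_mul c _
      rw [heq, e2, e3, e4, e5, e6]
    have h0 : (0:ℝ) ≤ ∫ x, (φs x - φ x) * (g x - c * f x) := integral_nonneg hpoint
    rw [hsplit, hφsf] at h0
    have hkey : ∫ x, φ x * g x ≤ ∫ x, φs x * g x := by
      have := mul_le_mul_of_nonneg_left hφf hc
      linarith
    rw [ge_iff_le, integral_gaussianReal']
    rw [hφsg] at hkey
    linarith
  · exact ⟨φs, hφs_meas, hφs01, rfl, hint0, by rw [hintμ]; ring⟩
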